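/- If Σ is a subsemigroup of a group G and Σ is infinite, then there exists a sequence α₁, α₂, α₃, … of elements of Σ such that no finite product α_{i₁} α_{i₂} ⋯ α_{iₙ} with i₁ < i₂ < ⋯ < iₙ equals the identity element of G. -/

import Mathlib

section Aux

variable {G : Type*} [Group G]

open Classical in
/-- Pick an element of `Sig` whose inverse is not in `P`. -/
noncomputable def pickElt (Sig : Set G) (P : Set G) : G :=
  if h : (Sig \ (fun p => p⁻¹) '' P).Nonempty then h.choose else 1

lemma pickElt_spec {Sig : Set G} (hinf : Sig.Infinite) {P : Set G} (hP : P.Finite) :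
    pickElt Sig P ∈ Sig ∧ ∀ p ∈ P, p * pickElt Sig P ≠ 1 := by
  have hne : (Sig \ (fun p => p⁻¹) '' P).Nonempty :=
    (hinf.diff (hP.image _)).nonempty
  have := hne.choose_spec
  rw [pickElt, dif_pos hne]
  refine ⟨this.1, fun p hp h1 => this.2 ?_⟩
  exact ⟨p, hp, by simp [eq_inv_of_mul_eq_one_left h1]⟩

/-- The recursive construction: the first component is the chosen element,
the second is the set of products built from previously chosen elements. -/
noncomputable def seqAux (Sig : Set G) : ℕ → G × Set G
  | 0 => (pickElt Sig {1}, {1})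
  | n + 1 =>
    let q := seqAux Sig n
    let P' := q.2 ∪ (fun p => p * q.1) '' q.2
    (pickElt Sig P', P')

lemma seqAux_finite (Sig : Set G) : ∀ n, (seqAux Sig n).2.Finite
  | 0 => Set.finite_singleton 1
  | n + 1 => ((seqAux_finite Sig n).union ((seqAux_finite Sig n).image _))

lemma seqAux_one_mem (Sig : Set G) : ∀ n, (1 : G) ∈ (seqAux Sig n).2
  | 0 => rfl
  | n + 1 => Or.inl (seqAux_one_mem Sig n)

lemma seqAux_mono (Sig : Set G) {m n : ℕ} (h : m ≤ n) :
    (seqAux Sig m).2 ⊆ (seqAux Sig n).2 := by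
  induction n with
  | zero => simpa [Nat.le_zero.mp h]
  | succ n ih =>
    rcases Nat.lt_or_ge m (n + 1) with h' | h'
    · exact (ih (Nat.lt_succ_iff.mp h')).trans (by
        show _ ⊆ (seqAux Sig (n+1)).2
        simp only [seqAux]
        exact Set.subset_union_left)
    · have : m = n + 1 := le_antisymm h h'
      subst this; rfl

lemma seqAux_mem_succ (Sig : Set G) (n : ℕ) {p : G} (hp : p ∈ (seqAux Sig n).2) :
    p * (seqAux Sig n).1 ∈ (seqAux Sig (n + 1)).2 := by
  show _ ∈ (seqAux Sig n).2 ∪ _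
  exact Or.inr ⟨p, hp, rfl⟩

lemma seqAux_spec {Sig : Set G} (hinf : Sig.Infinite) (n : ℕ) :
    (seqAux Sig n).1 ∈ Sig ∧ ∀ p ∈ (seqAux Sig n).2, p * (seqAux Sig n).1 ≠ 1 := by
  cases n with
  | zero => exact pickElt_spec hinf (Set.finite_singleton 1)
  | succ n =>
    exact pickElt_spec hinf ((seqAux_finite Sig n).union ((seqAux_finite Sig n).image _))

lemma seqAux_prod_mem {Sig : Set G} (l : List ℕ) (hl : l.Chain' (· < ·)) (m : ℕ)
    (hm : ∀ i ∈ l, i < m) :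
    (l.map fun n => (seqAux Sig n).1).prod ∈ (seqAux Sig m).2 := by
  induction l using List.reverseRecOn generalizing m with
  | nil => simpa using seqAux_one_mem Sig m
  | append_singleton l k ih =>
    have hpair := (List.isChain_iff_pairwise.mp hl)
    have hlk : ∀ i ∈ l, i < k := by
      intro i hi
      exact (List.pairwise_append.mp hpair).2.2 i hi k (List.mem_singleton_self k)
    have hl' : l.Chain' (· < ·) :=
      List.isChain_iff_pairwise.mpr (List.pairwise_append.mp hpair).1
    have h1 : (l.map fun n => (seqAux Sig n).1).prod ∈ (seqAux Sig k).2 := ih hl' k hlk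
    have h2 := seqAux_mem_succ Sig k h1
    have hkm : k + 1 ≤ m := hm k (by simp)
    have := seqAux_mono Sig hkm h2
    simpa using this

end Aux

/-- If `Σ` is an infinite subsemigroup of a group `G`, there is a sequence
`α : ℕ → G` of elements of `Σ` such that no ordered product over a nonempty
strictly increasing finite sequence of indices equals the identity. -/
theorem exists_nondegenerate_sequence_of_infinite_subsemigroup
    {G : Type*} [Group G] (Sig : Set G) (hinf : Sig.Infinite)
    (hmul : ∀ a ∈ Sig, ∀ b ∈ Sig, a * b ∈ Sig) :
    ∃ α : ℕ → G, (∀ n, α n ∈ Sig) ∧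
      ∀ l : List ℕ, l ≠ [] → l.Chain' (· < ·) → (l.map α).prod ≠ 1 := by
  refine ⟨fun n => (seqAux Sig n).1, fun n => (seqAux_spec hinf n).1, ?_⟩
  intro l hne hl
  obtain ⟨l', k, rfl⟩ := List.eq_nil_or_concat l |>.resolve_left hne
  have hpair := List.isChain_iff_pairwise.mp (by simpa [List.concat_eq_append, List.Chain'] using hl)
  have hlk : ∀ i ∈ l', i < k := fun i hi =>
    (List.pairwise_append.mp hpair).2.2 i hi k (List.mem_singleton_self k)
  have hl' : l'.Chain' (· < ·) :=
    List.isChain_iff_pairwise.mpr (List.pairwise_append.mp hpair).1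
  have hmem := seqAux_prod_mem (Sig := Sig) l' hl' k hlk
  have := (seqAux_spec hinf k).2 _ hmem
  simpa [List.concat_eq_append] using this
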